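/- Let f : ℝ → ℝ → ℝ be monotone non-decreasing on [1,∞)×[1,∞) (f(a,b) ≤ f(c,d) whenever 1 ≤ a ≤ c and 1 ≤ b ≤ d) and satisfy f(t,t) = C·t for all t ≥ 1, where C > 0. Then for every n, the measure μ_n is supported on the interval [(2+C)ⁿ, 2(2+C)ⁿ]; i.e., μ_n gives full measure to [(2+C)ⁿ, 2(2+C)ⁿ]. -/

import Mathlib

open MeasureTheory Filter
open scoped Classical

/-- The recursively defined sequence of measures: `μ₀ = (δ₁ + δ₂)/2` and `μ_{n+1}` is the
pushforward of `μ_n ⊗ μ_n ⊗ μ_n ⊗ μ_n` under `(a,b,c,d) ↦ a + b + f c d`. -/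
noncomputable def mu (f : ℝ → ℝ → ℝ) : ℕ → Measure ℝ
  | 0 => (2 : ENNReal)⁻¹ • Measure.dirac 1 + (2 : ENNReal)⁻¹ • Measure.dirac 2
  | n + 1 =>
      Measure.map (fun p : ℝ × ℝ × ℝ × ℝ => p.1 + p.2.1 + f p.2.2.1 p.2.2.2)
        ((mu f n).prod ((mu f n).prod ((mu f n).prod (mu f n))))

lemma meas_piecewise {α β : Type*} [MeasurableSpace α] [MeasurableSingletonClass α]
    [MeasurableSpace β] {T : Set α} (hT : T.Countable) (g : α → β) (z : β) :
    Measurable (fun x => if x ∈ T then g x else z) := by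
  intro A hA
  by_cases hz : z ∈ A
  · have : (fun x => if x ∈ T then g x else z) ⁻¹' A = (T ∩ g ⁻¹' A) ∪ Tᶜ := by
      ext x; by_cases hx : x ∈ T <;> simp [hx, hz]
    rw [this]
    exact ((hT.mono Set.inter_subset_left).measurableSet).union hT.measurableSet.compl
  · have : (fun x => if x ∈ T then g x else z) ⁻¹' A = T ∩ g ⁻¹' A := by
      ext x; by_cases hx : x ∈ T <;> simp [hx, hz]
    rw [this]
    exact (hT.mono Set.inter_subset_left).measurableSet

lemma aemeas_of_countable {α β : Type*} [MeasurableSpace α] [MeasurableSingletonClass α]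
    [MeasurableSpace β] [Inhabited β] {μ : Measure α} {T : Set α} (hT : T.Countable)
    (h0 : μ Tᶜ = 0) (g : α → β) : AEMeasurable g μ := by
  refine ⟨fun x => if x ∈ T then g x else default, meas_piecewise hT g default, ?_⟩
  refine measure_mono_null (fun x hx => ?_) h0
  simp only [Set.mem_compl_iff]
  intro hxT
  exact hx (by simp [hxT])

lemma prod_compl_null {α β : Type*} [MeasurableSpace α] [MeasurableSpace β]
    {μ : Measure α} {ν : Measure β} [SFinite μ] [SFinite ν] {s : Set α} {t : Set β}
    (hs : μ sᶜ = 0) (ht : ν tᶜ = 0) (hμ : μ Set.univ = 1) (hν : ν Set.univ = 1) :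
    μ.prod ν ((s ×ˢ t)ᶜ) = 0 := by
  have hsub : (s ×ˢ t)ᶜ ⊆ (sᶜ ×ˢ (Set.univ : Set β)) ∪ ((Set.univ : Set α) ×ˢ tᶜ) := by
    intro x hx
    simp only [Set.mem_compl_iff, Set.mem_prod, not_and_or] at hx
    rcases hx with h | h
    · exact Or.inl ⟨h, trivial⟩
    · exact Or.inr ⟨trivial, h⟩
  have h2 : μ.prod ν ((sᶜ ×ˢ (Set.univ : Set β)) ∪ ((Set.univ : Set α) ×ˢ tᶜ)) ≤
      μ.prod ν (sᶜ ×ˢ (Set.univ : Set β)) + μ.prod ν ((Set.univ : Set α) ×ˢ tᶜ) :=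
    measure_union_le _ _
  have := (measure_mono hsub).trans h2
  rw [Measure.prod_prod, Measure.prod_prod, hs, ht, hμ, hν] at this
  exact le_antisymm (by simpa using this) zero_le

theorem stmt6 (f : ℝ → ℝ → ℝ) (C : ℝ) (hC : 0 < C)
    (hmono : ∀ a b c d : ℝ, 1 ≤ a → a ≤ c → 1 ≤ b → b ≤ d → f a b ≤ f c d)
    (hlin : ∀ t : ℝ, 1 ≤ t → f t t = C * t) :
    ∀ n : ℕ, mu f n (Set.Icc ((2 + C) ^ n) (2 * (2 + C) ^ n)) = 1 := by
  have key : ∀ n : ℕ, ∃ S : Set ℝ, S.Countable ∧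
      S ⊆ Set.Icc ((2 + C) ^ n) (2 * (2 + C) ^ n) ∧
      mu f n Sᶜ = 0 ∧ mu f n Set.univ = 1 := by
    intro n
    induction n with
    | zero =>
      have hcnt : ({1, 2} : Set ℝ).Countable := (Set.countable_singleton 2).insert 1
      refine ⟨{1, 2}, hcnt, ?_, ?_, ?_⟩
      · intro x hx
        simp only [Set.mem_insert_iff, Set.mem_singleton_iff] at hx
        rcases hx with rfl | rfl <;> norm_num
      · have h1 : (1 : ℝ) ∈ ({1, 2} : Set ℝ) := by simp
        have h2 : (2 : ℝ) ∈ ({1, 2} : Set ℝ) := by simp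
        simp [mu, Measure.dirac_apply' _ hcnt.measurableSet.compl, Set.indicator, h1, h2]
      · simp [mu, ENNReal.inv_two_add_inv_two]
    | succ n ih =>
      obtain ⟨S, hSc, hSsub, hSnull, hSuniv⟩ := ih
      haveI : IsFiniteMeasure (mu f n) :=
        ⟨by rw [hSuniv]; exact ENNReal.one_lt_top⟩
      set L : ℝ := (2 + C) ^ n with hLdef
      have hL1 : (1 : ℝ) ≤ L := one_le_pow₀ (by linarith)
      set g : ℝ × ℝ × ℝ × ℝ → ℝ := fun p => p.1 + p.2.1 + f p.2.2.1 p.2.2.2 with hg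
      set T : Set (ℝ × ℝ × ℝ × ℝ) := S ×ˢ S ×ˢ S ×ˢ S with hT
      have hTc : T.Countable := hSc.prod (hSc.prod (hSc.prod hSc))
      set μp := (mu f n).prod ((mu f n).prod ((mu f n).prod (mu f n))) with hμp
      have hinner2 : ((mu f n).prod (mu f n)) ((S ×ˢ S)ᶜ) = 0 :=
        prod_compl_null hSnull hSnull hSuniv hSuniv
      have hu2 : ((mu f n).prod (mu f n)) Set.univ = 1 := by
        rw [← Set.univ_prod_univ, Measure.prod_prod, hSuniv, one_mul]
      have hinner3 : ((mu f n).prod ((mu f n).prod (mu f n))) ((S ×ˢ S ×ˢ S)ᶜ) = 0 :=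
        prod_compl_null hSnull hinner2 hSuniv hu2
      have hu3 : ((mu f n).prod ((mu f n).prod (mu f n))) Set.univ = 1 := by
        rw [← Set.univ_prod_univ, Measure.prod_prod, hSuniv, hu2, one_mul]
      have hTnull : μp Tᶜ = 0 := prod_compl_null hSnull hinner3 hSuniv hu3
      have hu4 : μp Set.univ = 1 := by
        rw [hμp, ← Set.univ_prod_univ, Measure.prod_prod, hSuniv, hu3, one_mul]
      have hgae : AEMeasurable g μp := aemeas_of_countable hTc hTnull g
      refine ⟨g '' T, hTc.image g, ?_, ?_, ?_⟩
      · rintro x ⟨⟨a, b, c, d⟩, hp, rfl⟩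
        obtain ⟨ha, hb, hc, hd⟩ := hp
        obtain ⟨ha1, ha2⟩ := hSsub ha
        obtain ⟨hb1, hb2⟩ := hSsub hb
        obtain ⟨hc1, hc2⟩ := hSsub hc
        obtain ⟨hd1, hd2⟩ := hSsub hd
        have h2L : (1 : ℝ) ≤ 2 * L := by linarith
        have hlow : f L L ≤ f c d := hmono L L c d hL1 hc1 hL1 hd1
        have hhigh : f c d ≤ f (2 * L) (2 * L) :=
          hmono c d (2 * L) (2 * L) (le_trans hL1 hc1) hc2 (le_trans hL1 hd1) hd2
        rw [hlin L hL1] at hlow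
        rw [hlin (2 * L) h2L] at hhigh
        constructor
        · show (2 + C) ^ (n + 1) ≤ a + b + f c d
          rw [pow_succ, ← hLdef]
          nlinarith
        · show a + b + f c d ≤ 2 * (2 + C) ^ (n + 1)
          rw [pow_succ, ← hLdef]
          nlinarith
      · have hmeas : MeasurableSet ((g '' T)ᶜ) := (hTc.image g).measurableSet.compl
        rw [show mu f (n + 1) = Measure.map g μp from rfl,
          Measure.map_apply_of_aemeasurable hgae hmeas]
        refine measure_mono_null ?_ hTnull
        rw [Set.preimage_compl, Set.compl_subset_compl]
        exact Set.subset_preimage_image g T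
      · rw [show mu f (n + 1) = Measure.map g μp from rfl,
          Measure.map_apply_of_aemeasurable hgae MeasurableSet.univ,
          Set.preimage_univ, hu4]
  intro n
  obtain ⟨S, hSc, hSsub, hSnull, hSuniv⟩ := key n
  have hIccnull : mu f n (Set.Icc ((2 + C) ^ n) (2 * (2 + C) ^ n))ᶜ = 0 :=
    measure_mono_null (Set.compl_subset_compl.mpr hSsub) hSnull
  refine le_antisymm (hSuniv ▸ measure_mono (Set.subset_univ _)) ?_
  calc (1 : ENNReal) = mu f n Set.univ := hSuniv.symm
    _ = mu f n (Set.Icc ((2 + C) ^ n) (2 * (2 + C) ^ n) ∪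
        (Set.Icc ((2 + C) ^ n) (2 * (2 + C) ^ n))ᶜ) := by rw [Set.union_compl_self]
    _ ≤ _ + _ := measure_union_le _ _
    _ = mu f n (Set.Icc ((2 + C) ^ n) (2 * (2 + C) ^ n)) := by rw [hIccnull, add_zero]
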